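/- Consider the input-free simplified RDN system τ·dR_i/dt = −R_i + β·R_i/(η + G), τ·dG/dt = −G + ∑_{j=1}^N R_j with τ > 0, η > 0, β > 0, and let J be the Jacobian of the vector field at the origin. If β < η then every eigenvalue of J is a negative real number, while if β > η then J has an eigenvalue that is a positive real number (namely (β − η)/(τη), with multiplicity N). -/

import Mathlib

/-- The vector field of the input-free simplified RDN system on
`(R_1, …, R_N, G)`: `dR_i/dt = (-R_i + β R_i/(η + G))/τ`,
`dG/dt = (-G + ∑_j R_j)/τ`. -/
noncomputable def rdnField (N : ℕ) (τ β η : ℝ) (x : (Fin N ⊕ Unit) → ℝ) :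
    (Fin N ⊕ Unit) → ℝ :=
  fun i => match i with
  | Sum.inl i => (-x (Sum.inl i) + β * x (Sum.inl i) / (η + x (Sum.inr ()))) / τ
  | Sum.inr _ => (-x (Sum.inr ()) + ∑ j, x (Sum.inl j)) / τ

/-- The Jacobian matrix of `F` at `p`: the matrix of partial derivatives of
the components of `F` with respect to the coordinates. -/
noncomputable def jacobian {n : Type*} [Fintype n] [DecidableEq n]
    (F : (n → ℝ) → n → ℝ) (p : n → ℝ) : Matrix n n ℝ :=
  Matrix.of fun i j => fderiv ℝ (fun x => F x i) p (Pi.single j 1)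

/-- `μ` is an eigenvalue of the complex matrix `M`. -/
def IsEigenvalue {n : Type*} [Fintype n] [DecidableEq n]
    (M : Matrix n n ℂ) (μ : ℂ) : Prop :=
  ∃ x : n → ℂ, x ≠ 0 ∧ M.mulVec x = μ • x

/-- The explicit Jacobian matrix of the RDN system at the origin. -/
noncomputable def rdnM (N : ℕ) (τ β η : ℝ) :
    Matrix (Fin N ⊕ Unit) (Fin N ⊕ Unit) ℝ :=
  Matrix.of fun k l => match k, l with
  | Sum.inl i, Sum.inl j => if i = j then (β - η) / (τ * η) else 0
  | Sum.inl _, Sum.inr _ => 0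
  | Sum.inr _, Sum.inl _ => 1 / τ
  | Sum.inr _, Sum.inr _ => -(1 / τ)

lemma jacobian_rdn (N : ℕ) (τ β η : ℝ) (hτ : 0 < τ) (hη : 0 < η) :
    jacobian (rdnField N τ β η) 0 = rdnM N τ β η := by
  ext k j
  rcases k with i | _
  · show fderiv ℝ (fun x : (Fin N ⊕ Unit) → ℝ =>
        (-x (Sum.inl i) + β * x (Sum.inl i) / (η + x (Sum.inr ()))) / τ) 0
        (Pi.single j 1) = _
    have hp : HasFDerivAt (fun x : (Fin N ⊕ Unit) → ℝ => x (Sum.inl i))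
        (ContinuousLinearMap.proj (Sum.inl i) : ((Fin N ⊕ Unit) → ℝ) →L[ℝ] ℝ) 0 :=
      hasFDerivAt_apply (Sum.inl i) 0
    have hg : HasFDerivAt (fun x : (Fin N ⊕ Unit) → ℝ => x (Sum.inr ()))
        (ContinuousLinearMap.proj (Sum.inr ()) : ((Fin N ⊕ Unit) → ℝ) →L[ℝ] ℝ) 0 :=
      hasFDerivAt_apply (Sum.inr ()) 0
    have hden : HasFDerivAt (fun x : (Fin N ⊕ Unit) → ℝ => η + x (Sum.inr ()))
        (ContinuousLinearMap.proj (Sum.inr ()) : ((Fin N ⊕ Unit) → ℝ) →L[ℝ] ℝ) 0 :=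
      hg.const_add η
    have hinv : HasDerivAt (fun y : ℝ => y⁻¹) (-(η ^ 2)⁻¹) η := hasDerivAt_inv hη.ne'
    have hginv := hinv.comp_hasFDerivAt_of_eq 0 hden (by simp)
    have hq := (hp.const_mul β).mul hginv
    have hfull := (hp.neg.add hq).mul_const τ⁻¹
    simp only [div_eq_mul_inv]
    have h2 : HasFDerivAt (fun x : (Fin N ⊕ Unit) → ℝ =>
        (-x (Sum.inl i) + β * x (Sum.inl i) * (η + x (Sum.inr ()))⁻¹) * τ⁻¹) _ 0 := hfull
    rw [h2.fderiv]
    rcases j with j | _ <;>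
      simp [Pi.single_apply, Function.comp, rdnM]
    · rcases eq_or_ne i j with h | h
      · simp [h]; field_simp; ring
      · simp [h, Ne.symm h]
  · show fderiv ℝ (fun x : (Fin N ⊕ Unit) → ℝ =>
        (-x (Sum.inr ()) + ∑ j', x (Sum.inl j')) / τ) 0 (Pi.single j 1) = _
    have hg : HasFDerivAt (fun x : (Fin N ⊕ Unit) → ℝ => x (Sum.inr ()))
        (ContinuousLinearMap.proj (Sum.inr ()) : ((Fin N ⊕ Unit) → ℝ) →L[ℝ] ℝ) 0 :=
      hasFDerivAt_apply (Sum.inr ()) 0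
    have hsum : HasFDerivAt (fun x : (Fin N ⊕ Unit) → ℝ => ∑ j' : Fin N, x (Sum.inl j'))
        (∑ j' : Fin N,
          (ContinuousLinearMap.proj (Sum.inl j') : ((Fin N ⊕ Unit) → ℝ) →L[ℝ] ℝ)) 0 :=
      HasFDerivAt.fun_sum fun j' _ => hasFDerivAt_apply (Sum.inl j') 0
    have hfull := (hg.neg.add hsum).mul_const τ⁻¹
    simp only [div_eq_mul_inv]
    have h2 : HasFDerivAt (fun x : (Fin N ⊕ Unit) → ℝ =>
        (-x (Sum.inr ()) + ∑ j' : Fin N, x (Sum.inl j')) * τ⁻¹) _ 0 := hfull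
    rw [h2.fderiv]
    rcases j with j | _ <;>
      simp [Pi.single_apply, Finset.sum_ite_eq, one_div, rdnM]

open Polynomial in
lemma rdnM_charpoly (N : ℕ) (τ β η : ℝ) :
    (rdnM N τ β η).charpoly =
      (X - C ((β - η) / (τ * η))) ^ N * (X + C (1 / τ)) := by
  have hcm : (rdnM N τ β η).charmatrix =
      Matrix.fromBlocks ((X - C ((β - η) / (τ * η))) • (1 : Matrix (Fin N) (Fin N) ℝ[X]))
        0 (Matrix.of fun _ _ => -C (1 / τ))
        (Matrix.of fun _ _ => X + C (1 / τ)) := by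
    ext k l
    rcases k with i | u <;> rcases l with j | v
    · rcases eq_or_ne i j with h | h
      · subst h
        simp [Matrix.charmatrix_apply_eq, rdnM, Matrix.one_apply]
      · simp [Matrix.charmatrix_apply_ne _ _ _ (by simpa using h), rdnM,
          Matrix.one_apply, h]
    · simp [Matrix.charmatrix_apply_ne _ (Sum.inl i) (Sum.inr v) (by simp), rdnM]
    · simp [Matrix.charmatrix_apply_ne _ (Sum.inr u) (Sum.inl j) (by simp), rdnM]
    · simp [Matrix.charmatrix_apply_eq, rdnM, sub_eq_add_neg, map_neg]
  rw [Matrix.charpoly, hcm, Matrix.det_fromBlocks_zero₁₂, Matrix.det_smul,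
    Matrix.det_one, Matrix.det_unique]
  simp

/-- For the Jacobian `J` of the input-free simplified RDN system at the
origin: if `β < η` then every (complex) eigenvalue of `J` is a negative real
number, while if `β > η` then `J` has a positive real eigenvalue, namely
`(β - η)/(τη)`, with multiplicity `N`. -/
theorem rdn_origin_stability (N : ℕ) (hN : 1 ≤ N) (τ β η : ℝ)
    (hτ : 0 < τ) (hη : 0 < η) (hβ : 0 < β) :
    (β < η → ∀ μ : ℂ,
      IsEigenvalue ((jacobian (rdnField N τ β η) 0).map Complex.ofReal) μ →
        μ.im = 0 ∧ μ.re < 0) ∧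
    (η < β →
      IsEigenvalue ((jacobian (rdnField N τ β η) 0).map Complex.ofReal)
          (((β - η) / (τ * η) : ℝ) : ℂ) ∧
        0 < (β - η) / (τ * η) ∧
        (jacobian (rdnField N τ β η) 0).charpoly.rootMultiplicity
          ((β - η) / (τ * η)) = N) := by
  have hjac := jacobian_rdn N τ β η hτ hη
  rw [hjac]
  set a : ℝ := (β - η) / (τ * η) with ha
  have hcast : (a : ℂ) = ((β : ℂ) - η) / ((τ : ℂ) * η) := by
    rw [ha]; push_cast; ring
  constructor
  · -- stability when β < η
    intro hlt μ ⟨x, hx0, hmv⟩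
    have hane : a < 0 :=
      div_neg_of_neg_of_pos (by linarith) (by positivity)
    have h1 : ∀ i : Fin N, x (Sum.inl i) ≠ 0 → μ = (a : ℂ) := by
      intro i hi
      have h := congrFun hmv (Sum.inl i)
      simp [Matrix.mulVec, dotProduct, Fintype.sum_sum_type, rdnM,
        Matrix.map_apply, apply_ite, mul_ite, ite_mul,
        Finset.sum_ite_eq, ← hcast] at h
      rcases h with h | h
      · exact h.symm
      · exact absurd h hi
    by_cases hx : ∀ i : Fin N, x (Sum.inl i) = 0
    · -- eigenvector supported on G, μ = -(1/τ)
      have hxr : x (Sum.inr ()) ≠ 0 := by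
        intro h
        apply hx0
        funext k
        rcases k with i | ⟨⟩
        · exact hx i
        · exact h
      have h2 := congrFun hmv (Sum.inr ())
      simp [Matrix.mulVec, dotProduct, Fintype.sum_sum_type, rdnM,
        Matrix.map_apply, hx] at h2
      have hμ : μ = ((-(1 / τ) : ℝ) : ℂ) := by
        have h2' : ((-(1 / τ) : ℝ) : ℂ) * x (Sum.inr ()) = μ * x (Sum.inr ()) := by
          push_cast
          rw [← h2]
          ring
        exact (mul_right_cancel₀ hxr h2'.symm)
      rw [hμ]
      constructor
      · simp
      · simp only [Complex.ofReal_re]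
        have : 0 < 1 / τ := by positivity
        linarith
    · -- some R_i component nonzero, μ = a
      push_neg at hx
      obtain ⟨i, hi⟩ := hx
      rw [h1 i hi]
      exact ⟨by simp, by simpa using hane⟩
  · -- instability when η < β
    intro hlt
    have hapos : 0 < a := div_pos (by linarith) (by positivity)
    have hτ' : 0 < 1 / τ := by positivity
    refine ⟨?_, hapos, ?_⟩
    · -- exhibit an eigenvector
      set i0 : Fin N := ⟨0, hN⟩ with hi0
      set c : ℝ := (1 / τ) / (a + 1 / τ) with hc
      have hden : a + 1 / τ ≠ 0 := by positivity
      have hceq : a * c + (1 / τ) * c = 1 / τ := by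
        rw [hc]; field_simp
      refine ⟨fun k => match k with
        | Sum.inl j => if j = i0 then 1 else 0
        | Sum.inr _ => (c : ℂ), ?_, ?_⟩
      · intro h
        have := congrFun h (Sum.inl i0)
        simp at this
      · funext k
        rcases k with i | ⟨⟩
        · have : (Matrix.map (rdnM N τ β η) Complex.ofReal).mulVec
              (fun k => match k with
                | Sum.inl j => if j = i0 then (1 : ℂ) else 0
                | Sum.inr _ => (c : ℂ)) (Sum.inl i)
              = (a : ℂ) * (if i = i0 then 1 else 0) := by
            rcases eq_or_ne i i0 with h | h <;>
              simp [h, Matrix.mulVec, dotProduct, Fintype.sum_sum_type, rdnM,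
                Matrix.map_apply, apply_ite, mul_ite, ite_mul, Finset.sum_ite_eq, ← hcast]
          rw [this]
          simp [Pi.smul_apply, smul_eq_mul]
        · have : (Matrix.map (rdnM N τ β η) Complex.ofReal).mulVec
              (fun k => match k with
                | Sum.inl j => if j = i0 then (1 : ℂ) else 0
                | Sum.inr _ => (c : ℂ)) (Sum.inr ())
              = ((1 / τ : ℝ) : ℂ) - ((1 / τ : ℝ) : ℂ) * (c : ℂ) := by
            simp [Matrix.mulVec, dotProduct, Fintype.sum_sum_type, rdnM,
              Matrix.map_apply, apply_ite, mul_ite, ite_mul, Finset.sum_ite_eq]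
            ring
          rw [this]
          have hr : (1 / τ) - (1 / τ) * c = a * c := by linarith [hceq]
          simp only [Pi.smul_apply, smul_eq_mul]
          exact_mod_cast hr
    · -- root multiplicity
      rw [rdnM_charpoly]
      have h1 : ((Polynomial.X - Polynomial.C a) ^ N : Polynomial ℝ) ≠ 0 :=
        pow_ne_zero _ (Polynomial.X_sub_C_ne_zero a)
      have h2 : (Polynomial.X + Polynomial.C (1 / τ) : Polynomial ℝ) ≠ 0 :=
        Polynomial.X_add_C_ne_zero (1 / τ)
      rw [Polynomial.rootMultiplicity_mul (mul_ne_zero h1 h2),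
        Polynomial.rootMultiplicity_X_sub_C_pow,
        Polynomial.rootMultiplicity_eq_zero, add_zero]
      intro h
      have := h
      simp [Polynomial.IsRoot, Polynomial.eval_add] at this
      have hτ'' : 0 < τ⁻¹ := inv_pos.mpr hτ
      linarith
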